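/- Let Ξ ⊆ A^{ℤ²} be a subshift whose shift action is minimal and uniquely ergodic, and suppose Ξ admits both a horizontal shear and a vertical shear. Then the set of topological eigenvalues of the shift action on Ξ is precisely ℤ × ℤ ⊆ ℝ²: every λ ∈ ℤ² is a topological eigenvalue (with constant eigenfunction), and every topological eigenvalue λ ∈ ℝ² lies in ℤ². -/

import Mathlib

open MeasureTheory

/-- The shift `ℤ²`-action on the full shift `A^{ℤ²}`: `(φⁿ u)(m) = u(m+n)`. -/
def shift2 {A : Type*} (n : ℤ × ℤ) (u : ℤ × ℤ → A) : ℤ × ℤ → A := fun m => u (m + n)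

section Defs

variable {A : Type*} [TopologicalSpace A]

/-- A subshift: a nonempty, closed, shift-invariant subset of the full shift. -/
def IsSubshift (Ξ : Set (ℤ × ℤ → A)) : Prop :=
  Ξ.Nonempty ∧ IsClosed Ξ ∧ ∀ (n : ℤ × ℤ), ∀ u ∈ Ξ, shift2 n u ∈ Ξ

/-- Minimality: every orbit is dense in the subshift. -/
def IsMinimalSubshift (Ξ : Set (ℤ × ℤ → A)) : Prop :=
  ∀ u ∈ Ξ, Ξ ⊆ closure {v | ∃ n : ℤ × ℤ, v = shift2 n u}

/-- Freeness: the shift action is free on the subshift. -/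
def IsFreeSubshift (Ξ : Set (ℤ × ℤ → A)) : Prop :=
  ∀ u ∈ Ξ, ∀ n : ℤ × ℤ, shift2 n u = u → n = 0

/-- A continuous `ℤ`-valued cocycle on the subshift `Ξ`: continuous in the first
variable, and satisfying `θ(u, n+m) = θ(u, n) + θ(φⁿ u, m)` on `Ξ`. -/
def IsContinuousCocycle (Ξ : Set (ℤ × ℤ → A)) (θ : (ℤ × ℤ → A) → ℤ × ℤ → ℤ) : Prop :=
  (∀ n : ℤ × ℤ, ContinuousOn (fun u => θ u n) Ξ) ∧
  (∀ u ∈ Ξ, ∀ n m : ℤ × ℤ, θ u (n + m) = θ u n + θ (shift2 n u) m)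

variable [MeasurableSpace A]

/-- A shift-invariant Borel probability measure on the subshift `Ξ`, encoded as a
probability measure on the full shift giving `Ξ` full measure. -/
def IsInvariantProb (Ξ : Set (ℤ × ℤ → A)) (μ : Measure (ℤ × ℤ → A)) : Prop :=
  IsProbabilityMeasure μ ∧ μ Ξᶜ = 0 ∧ ∀ n : ℤ × ℤ, μ.map (shift2 n) = μ

end Defs

/-- Horizontal shear: there are `u ∈ Ξ` and `N, N' : ℤ` such that for every `n : ℤ`
there is `v ∈ Ξ` agreeing with `u` on `ℤ × N₊` and with `φ^{(n,0)} u` on `ℤ × N'₋`. -/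
def AdmitsHorizontalShear {A : Type*} [TopologicalSpace A] (Ξ : Set (ℤ × ℤ → A)) : Prop :=
  ∃ u ∈ Ξ, ∃ N N' : ℤ, ∀ n : ℤ, ∃ v ∈ Ξ,
    (∀ m : ℤ × ℤ, N < m.2 → v m = u m) ∧
    (∀ m : ℤ × ℤ, m.2 < N' → v m = shift2 (n, 0) u m)

/-- Vertical shear: there are `u ∈ Ξ` and `N, N' : ℤ` such that for every `n : ℤ`
there is `v ∈ Ξ` agreeing with `u` on `N₊ × ℤ` and with `φ^{(0,n)} u` on `N'₋ × ℤ`. -/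
def AdmitsVerticalShear {A : Type*} [TopologicalSpace A] (Ξ : Set (ℤ × ℤ → A)) : Prop :=
  ∃ u ∈ Ξ, ∃ N N' : ℤ, ∀ n : ℤ, ∃ v ∈ Ξ,
    (∀ m : ℤ × ℤ, N < m.1 → v m = u m) ∧
    (∀ m : ℤ × ℤ, m.1 < N' → v m = shift2 (0, n) u m)

/-- `λ = (λ₁, λ₂) ∈ ℝ²` is a topological eigenvalue of the shift action on `Ξ`:
there is a continuous `ψ : Ξ → ℂ` of modulus one with
`ψ(φⁿ u) = exp(2πi (λ₁ n₁ + λ₂ n₂)) ψ(u)`. -/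
def IsTopologicalEigenvalue {A : Type*} [TopologicalSpace A] (Ξ : Set (ℤ × ℤ → A))
    (lam : ℝ × ℝ) : Prop :=
  ∃ ψ : (ℤ × ℤ → A) → ℂ, ContinuousOn ψ Ξ ∧ (∀ u ∈ Ξ, ‖ψ u‖ = 1) ∧
    ∀ u ∈ Ξ, ∀ n : ℤ × ℤ,
      ψ (shift2 n u) =
        Complex.exp (2 * Real.pi * Complex.I *
          ((lam.1 * (n.1 : ℝ) + lam.2 * (n.2 : ℝ) : ℝ) : ℂ)) * ψ u

open Filter Topology in
lemma cluster_zero {A : Type} [Fintype A] [TopologicalSpace A] [DiscreteTopology A]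
    (Ξ : Set (ℤ × ℤ → A)) (hclosed : IsClosed Ξ)
    (ψ : (ℤ × ℤ → A) → ℂ) (hψ : ContinuousOn ψ Ξ)
    (x y : ℕ → ℤ × ℤ → A) (hx : ∀ M, x M ∈ Ξ) (hy : ∀ M, y M ∈ Ξ)
    (heq : ∀ m : ℤ × ℤ, ∀ᶠ M in atTop, x M m = y M m)
    (c : ℝ) (hc : ∀ M, ‖ψ (x M) - ψ (y M)‖ = c) : c = 0 := by
  have hK : IsCompact Ξ := hclosed.isCompact
  set g : ℕ → (ℤ × ℤ → A) × (ℤ × ℤ → A) := fun M => (x M, y M) with hg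
  have hgmem : ∀ M, g M ∈ Ξ ×ˢ Ξ := fun M => ⟨hx M, hy M⟩
  have hle : Filter.map g atTop ≤ 𝓟 (Ξ ×ˢ Ξ) :=
    le_principal_iff.2 (Filter.mem_map.2 (Filter.Eventually.of_forall hgmem))
  obtain ⟨p, hpmem, hp⟩ := (hK.prod hK).exists_clusterPt hle
  have hpe : p.1 = p.2 := by
    funext m
    have hSc : IsClosed {q : (ℤ × ℤ → A) × (ℤ × ℤ → A) | q.1 m = q.2 m} :=
      isClosed_eq ((continuous_apply m).comp continuous_fst)
        ((continuous_apply m).comp continuous_snd)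
    have hmem : {q : (ℤ × ℤ → A) × (ℤ × ℤ → A) | q.1 m = q.2 m} ∈ Filter.map g atTop :=
      Filter.mem_map.2 ((heq m).mono fun M h => h)
    have hcp : ClusterPt p (𝓟 {q : (ℤ × ℤ → A) × (ℤ × ℤ → A) | q.1 m = q.2 m}) :=
      hp.mono (le_principal_iff.2 hmem)
    exact hSc.closure_subset (mem_closure_iff_clusterPt.2 hcp)
  set h : (ℤ × ℤ → A) × (ℤ × ℤ → A) → ℂ := fun q => ψ q.1 - ψ q.2 with hh
  have hcont : ContinuousWithinAt h (Ξ ×ˢ Ξ) p := by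
    have : ContinuousOn h (Ξ ×ˢ Ξ) :=
      (hψ.comp continuous_fst.continuousOn fun q hq => hq.1).sub
        (hψ.comp continuous_snd.continuousOn fun q hq => hq.2)
    exact this p hpmem
  have hle2 : 𝓝 p ⊓ Filter.map g atTop ≤ 𝓝[Ξ ×ˢ Ξ] p := by
    rw [nhdsWithin]
    exact inf_le_inf_left _ hle
  have key : Filter.map h (𝓝 p ⊓ Filter.map g atTop) ≤
      𝓝 (h p) ⊓ Filter.map (h ∘ g) atTop := by
    refine le_inf ?_ ?_
    · exact (hcont.mono_left hle2 : Filter.Tendsto h (𝓝 p ⊓ Filter.map g atTop) (𝓝 (h p)))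
    · calc Filter.map h (𝓝 p ⊓ Filter.map g atTop)
          ≤ Filter.map h (Filter.map g atTop) := Filter.map_mono inf_le_right
        _ = Filter.map (h ∘ g) atTop := Filter.map_map
  have hpne : (𝓝 p ⊓ Filter.map g atTop).NeBot := hp
  have h2 : ClusterPt (h p) (Filter.map (h ∘ g) atTop) := by
    have := hpne.map h
    exact this.mono key
  have hT : IsClosed {z : ℂ | ‖z‖ = c} :=
    isClosed_eq continuous_norm continuous_const
  have hmemT : {z : ℂ | ‖z‖ = c} ∈ Filter.map (h ∘ g) atTop :=
    Filter.mem_map.2 (Filter.Eventually.of_forall fun M => hc M)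
  have h3 : ‖h p‖ = c :=
    hT.closure_subset (mem_closure_iff_clusterPt.2 (h2.mono (le_principal_iff.2 hmemT)))
  rw [hh] at h3
  simp only [hpe, sub_self, norm_zero] at h3
  exact h3.symm

open Filter Topology in
lemma psi_eq {A : Type} [Fintype A] [TopologicalSpace A] [DiscreteTopology A]
    (Ξ : Set (ℤ × ℤ → A)) (hclosed : IsClosed Ξ)
    (hinv : ∀ (n : ℤ × ℤ), ∀ u ∈ Ξ, shift2 n u ∈ Ξ)
    (lam : ℝ × ℝ) (ψ : (ℤ × ℤ → A) → ℂ) (hψ : ContinuousOn ψ Ξ)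
    (heig : ∀ u ∈ Ξ, ∀ n : ℤ × ℤ,
      ψ (shift2 n u) =
        Complex.exp (2 * Real.pi * Complex.I *
          ((lam.1 * (n.1 : ℝ) + lam.2 * (n.2 : ℝ) : ℝ) : ℂ)) * ψ u)
    (v w : ℤ × ℤ → A) (hv : v ∈ Ξ) (hw : w ∈ Ξ) (e : ℤ × ℤ)
    (hagree : ∀ m : ℤ × ℤ, ∀ᶠ M : ℕ in atTop,
      v (m + (M : ℤ) • e) = w (m + (M : ℤ) • e)) :
    ψ v = ψ w := by
  have habs : ∀ r : ℝ, ‖Complex.exp (2 * Real.pi * Complex.I * (r : ℂ))‖ = 1 := by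
    intro r
    have : (2 * Real.pi * Complex.I * (r : ℂ)) = ((2 * Real.pi * r : ℝ) : ℂ) * Complex.I := by
      push_cast; ring
    rw [this, Complex.norm_exp_ofReal_mul_I]
  have h0 := cluster_zero Ξ hclosed ψ hψ
    (fun M => shift2 ((M : ℤ) • e) v) (fun M => shift2 ((M : ℤ) • e) w)
    (fun M => hinv _ _ hv) (fun M => hinv _ _ hw)
    (fun m => hagree m)
    (‖ψ v - ψ w‖)
    (fun M => by
      rw [heig v hv, heig w hw, ← mul_sub, norm_mul, habs, one_mul])
  have : ψ v - ψ w = 0 := by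
    rwa [← norm_eq_zero]
  exact sub_eq_zero.mp this

/-- In a minimal, uniquely ergodic `ℤ²` subshift admitting shears in both coordinate
directions, the set of topological eigenvalues is precisely `ℤ × ℤ ⊆ ℝ²`. -/
theorem statement6 {A : Type} [Fintype A] [Nonempty A]
    [TopologicalSpace A] [DiscreteTopology A] [MeasurableSpace A] [BorelSpace A]
    (Ξ : Set (ℤ × ℤ → A)) (hsub : IsSubshift Ξ) (hmin : IsMinimalSubshift Ξ)
    (huerg : ∃! μ : Measure (ℤ × ℤ → A), IsInvariantProb Ξ μ)
    (hH : AdmitsHorizontalShear Ξ) (hV : AdmitsVerticalShear Ξ) :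
    (∀ a : ℤ × ℤ, IsTopologicalEigenvalue Ξ ((a.1 : ℝ), (a.2 : ℝ))) ∧
    (∀ lam : ℝ × ℝ, IsTopologicalEigenvalue Ξ lam →
      ∃ j k : ℤ, lam = ((j : ℝ), (k : ℝ))) := by
  constructor
  · -- every integer vector is an eigenvalue, with constant eigenfunction
    intro a
    refine ⟨fun _ => 1, continuousOn_const, fun u _ => by simp, fun u hu n => ?_⟩
    have hk : ((a.1 : ℝ) * (n.1 : ℝ) + (a.2 : ℝ) * (n.2 : ℝ) : ℝ)
        = ((a.1 * n.1 + a.2 * n.2 : ℤ) : ℝ) := by push_cast; ring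
    rw [hk]
    have : Complex.exp (2 * Real.pi * Complex.I *
        (((a.1 * n.1 + a.2 * n.2 : ℤ) : ℝ) : ℂ)) = 1 := by
      rw [Complex.exp_eq_one_iff]
      exact ⟨a.1 * n.1 + a.2 * n.2, by push_cast; ring⟩
    rw [this, one_mul]
  · intro lam ⟨ψ, hψc, hψa, heig⟩
    obtain ⟨_, hclosed, hinv⟩ := hsub
    have h2piI : (2 * (Real.pi : ℂ) * Complex.I) ≠ 0 :=
      mul_ne_zero (mul_ne_zero two_ne_zero (Complex.ofReal_ne_zero.2 Real.pi_ne_zero))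
        Complex.I_ne_zero
    have keyH : ∀ (u : ℤ × ℤ → A), u ∈ Ξ → ∀ N N' : ℤ, ∀ n : ℤ, ∀ v ∈ Ξ,
        (∀ m : ℤ × ℤ, N < m.2 → v m = u m) →
        (∀ m : ℤ × ℤ, m.2 < N' → v m = shift2 (n, 0) u m) →
        Complex.exp (2 * Real.pi * Complex.I *
          ((lam.1 * (n : ℝ) + lam.2 * ((0 : ℤ) : ℝ) : ℝ) : ℂ)) = 1 := by
      intro u hu N N' n v hvΞ h1 h2
      have e1 : ψ v = ψ u := by
        refine psi_eq Ξ hclosed hinv lam ψ hψc heig v u hvΞ hu ((0 : ℤ), (1 : ℤ)) ?_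
        intro m
        rw [Filter.eventually_atTop]
        refine ⟨(N - m.2).toNat + 1, fun M hM => ?_⟩
        apply h1
        have := Int.self_le_toNat (N - m.2)
        have hM' : ((N - m.2).toNat : ℤ) + 1 ≤ (M : ℤ) := by exact_mod_cast hM
        simp only [Prod.smul_snd, Prod.snd_add, smul_eq_mul, mul_one]
        omega
      have e2 : ψ v = ψ (shift2 (n, 0) u) := by
        refine psi_eq Ξ hclosed hinv lam ψ hψc heig v (shift2 (n, 0) u) hvΞ
          (hinv _ _ hu) ((0 : ℤ), (-1 : ℤ)) ?_
        intro m
        rw [Filter.eventually_atTop]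
        refine ⟨(m.2 - N').toNat + 1, fun M hM => ?_⟩
        apply h2
        have := Int.self_le_toNat (m.2 - N')
        have hM' : ((m.2 - N').toNat : ℤ) + 1 ≤ (M : ℤ) := by exact_mod_cast hM
        simp only [Prod.smul_snd, Prod.snd_add, smul_eq_mul, mul_neg, mul_one]
        omega
      have e3 := heig u hu (n, 0)
      rw [← e1, e2] at *
      have hne : ψ (shift2 (n, 0) u) ≠ 0 := by
        intro h
        have := hψa _ (hinv (n, 0) u hu)
        rw [h] at this; simp at this
      have h4 : Complex.exp (2 * Real.pi * Complex.I *
          ((lam.1 * (n : ℝ) + lam.2 * ((0 : ℤ) : ℝ) : ℝ) : ℂ)) * ψ (shift2 (n, 0) u)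
          = 1 * ψ (shift2 (n, 0) u) := by
        rw [one_mul]; exact e3.symm
      exact mul_right_cancel₀ hne h4
    have keyV : ∀ (u : ℤ × ℤ → A), u ∈ Ξ → ∀ N N' : ℤ, ∀ n : ℤ, ∀ v ∈ Ξ,
        (∀ m : ℤ × ℤ, N < m.1 → v m = u m) →
        (∀ m : ℤ × ℤ, m.1 < N' → v m = shift2 (0, n) u m) →
        Complex.exp (2 * Real.pi * Complex.I *
          ((lam.1 * ((0 : ℤ) : ℝ) + lam.2 * (n : ℝ) : ℝ) : ℂ)) = 1 := by
      intro u hu N N' n v hvΞ h1 h2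
      have e1 : ψ v = ψ u := by
        refine psi_eq Ξ hclosed hinv lam ψ hψc heig v u hvΞ hu ((1 : ℤ), (0 : ℤ)) ?_
        intro m
        rw [Filter.eventually_atTop]
        refine ⟨(N - m.1).toNat + 1, fun M hM => ?_⟩
        apply h1
        have := Int.self_le_toNat (N - m.1)
        have hM' : ((N - m.1).toNat : ℤ) + 1 ≤ (M : ℤ) := by exact_mod_cast hM
        simp only [Prod.smul_fst, Prod.fst_add, smul_eq_mul, mul_one]
        omega
      have e2 : ψ v = ψ (shift2 (0, n) u) := by
        refine psi_eq Ξ hclosed hinv lam ψ hψc heig v (shift2 (0, n) u) hvΞ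
          (hinv _ _ hu) ((-1 : ℤ), (0 : ℤ)) ?_
        intro m
        rw [Filter.eventually_atTop]
        refine ⟨(m.1 - N').toNat + 1, fun M hM => ?_⟩
        apply h2
        have := Int.self_le_toNat (m.1 - N')
        have hM' : ((m.1 - N').toNat : ℤ) + 1 ≤ (M : ℤ) := by exact_mod_cast hM
        simp only [Prod.smul_fst, Prod.fst_add, smul_eq_mul, mul_neg, mul_one]
        omega
      have e3 := heig u hu (0, n)
      rw [← e1, e2] at *
      have hne : ψ (shift2 (0, n) u) ≠ 0 := by
        intro h
        have := hψa _ (hinv (0, n) u hu)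
        rw [h] at this; simp at this
      have h4 : Complex.exp (2 * Real.pi * Complex.I *
          ((lam.1 * ((0 : ℤ) : ℝ) + lam.2 * (n : ℝ) : ℝ) : ℂ)) * ψ (shift2 (0, n) u)
          = 1 * ψ (shift2 (0, n) u) := by
        rw [one_mul]; exact e3.symm
      exact mul_right_cancel₀ hne h4
    obtain ⟨u, hu, N, N', hshear⟩ := hH
    obtain ⟨vv, hvΞ, h1, h2⟩ := hshear 1
    have hexp1 := keyH u hu N N' 1 vv hvΞ h1 h2
    obtain ⟨u', hu', N2, N2', hshear'⟩ := hV
    obtain ⟨vv', hvΞ', h1', h2'⟩ := hshear' 1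
    have hexp2 := keyV u' hu' N2 N2' 1 vv' hvΞ' h1' h2'
    rw [Complex.exp_eq_one_iff] at hexp1 hexp2
    obtain ⟨j, hj⟩ := hexp1
    obtain ⟨k, hk⟩ := hexp2
    refine ⟨j, k, ?_⟩
    have hj' : (lam.1 : ℂ) = (j : ℂ) := by
      apply mul_left_cancel₀ h2piI
      rw [mul_comm ((j : ℂ)) _] at hj
      push_cast at hj ⊢
      convert hj using 1 <;> ring
    have hk' : (lam.2 : ℂ) = (k : ℂ) := by
      apply mul_left_cancel₀ h2piI
      rw [mul_comm ((k : ℂ)) _] at hk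
      push_cast at hk ⊢
      convert hk using 1 <;> ring
    have e5 : lam.1 = (j : ℝ) := by exact_mod_cast hj'
    have e6 : lam.2 = (k : ℝ) := by exact_mod_cast hk'
    exact Prod.ext e5 e6
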